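/- Let K : [0,∞) → (0,∞) satisfy (H1) and (H2) with constant β ≥ 0, and define K̂(z) = ∫₀^z K(t) dt. Then for every μ with 0 ≤ μ ≤ 1 and every z ≥ 0, one has K̂(μ·z) ≥ μ^{β+1} · K̂(z). -/

import Mathlib

/-- Lemma 3.2 (6): if `K : [0,∞) → (0,∞)` is continuous, non-decreasing on `(0,∞)`
(hypothesis (H1)) and `z ↦ K z / z^β` is non-increasing on `(0,∞)` (hypothesis (H2))
for some `β ≥ 0`, and `K̂ z = ∫₀^z K t dt`, then `K̂ (μ*z) ≥ μ^(β+1) * K̂ z`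
for all `0 ≤ μ ≤ 1` and `z ≥ 0`. -/
theorem kirchhoff_primitive_lower_scaling (K : ℝ → ℝ) (β : ℝ) (hβ : 0 ≤ β)
    (hcont : ContinuousOn K (Set.Ici 0))
    (hpos : ∀ z, 0 ≤ z → 0 < K z)
    (hmono : ∀ a b, 0 < a → a ≤ b → K a ≤ K b)
    (hanti : ∀ a b, 0 < a → a ≤ b → K b / b ^ β ≤ K a / a ^ β)
    (μ z : ℝ) (hμ0 : 0 ≤ μ) (hμ1 : μ ≤ 1) (hz : 0 ≤ z) :
    μ ^ (β + 1) * (∫ t in (0:ℝ)..z, K t) ≤ ∫ t in (0:ℝ)..(μ * z), K t := by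
  rcases eq_or_lt_of_le hμ0 with rfl | hμ'
  · simp only [zero_mul, intervalIntegral.integral_same]
    rw [Real.zero_rpow (by linarith)]
    simp
  have hKint : IntervalIntegrable K MeasureTheory.volume 0 z := by
    apply ContinuousOn.intervalIntegrable
    apply hcont.mono
    rw [Set.uIcc_of_le hz]
    exact fun x hx => hx.1
  have hKμint : IntervalIntegrable (fun t => K (μ * t)) MeasureTheory.volume 0 z := by
    apply ContinuousOn.intervalIntegrable
    apply hcont.comp (continuous_const.mul continuous_id).continuousOn
    rw [Set.uIcc_of_le hz]
    exact fun x hx => mul_nonneg hμ0 hx.1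
  have hsub : ∫ t in (0:ℝ)..(μ*z), K t = μ * ∫ t in (0:ℝ)..z, K (μ * t) := by
    rw [intervalIntegral.integral_comp_mul_left (fun t => K t) (ne_of_gt hμ')]
    rw [mul_zero]
    field_simp
    rw [smul_eq_mul, ← mul_assoc, mul_one_div_cancel (ne_of_gt hμ'), one_mul]
  rw [hsub]
  have hrw : μ ^ (β+1) = μ * μ ^ β := by
    rw [Real.rpow_add hμ', Real.rpow_one]; ring
  rw [hrw, mul_assoc]
  apply mul_le_mul_of_nonneg_left _ hμ0
  rw [← intervalIntegral.integral_const_mul]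
  apply intervalIntegral.integral_mono_on hz (hKint.const_mul _) hKμint
  intro t ht
  rcases eq_or_lt_of_le ht.1 with rfl | ht0
  · rw [mul_zero]
    calc μ ^ β * K 0 ≤ 1 * K 0 := by
          apply mul_le_mul_of_nonneg_right (Real.rpow_le_one hμ0 hμ1 hβ) (hpos 0 le_rfl).le
      _ = K 0 := one_mul _
  · have hμt : 0 < μ * t := mul_pos hμ' ht0
    have h1 : K t / t ^ β ≤ K (μ * t) / (μ * t) ^ β :=
      hanti (μ * t) t hμt (by nlinarith)
    have htβ : (0:ℝ) < t ^ β := Real.rpow_pos_of_pos ht0 β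
    have hμtβ : (0:ℝ) < (μ * t) ^ β := Real.rpow_pos_of_pos hμt β
    rw [div_le_div_iff₀ htβ hμtβ] at h1
    have hmr : (μ * t) ^ β = μ ^ β * t ^ β := Real.mul_rpow hμ0 ht0.le
    rw [hmr] at h1
    nlinarith [Real.rpow_pos_of_pos hμ' β]
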